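/- If a fixed man m pushes down a subset X of women originally ranked above his DA partner μ(m) (moving them below μ(m) in his list), then in the resulting DA matching every man is weakly better off, and m is still matched to μ(m). -/

import Mathlib

/-- A stable marriage profile: `M m` is man `m`'s ranking of women
(`M m k` = his `k`-th favorite woman), `W w` is woman `w`'s ranking of men. -/
structure Profile (n : ℕ) where
  M : Fin n → (Fin n ≃ Fin n)
  W : Fin n → (Fin n ≃ Fin n)

/-- Man `m` strictly prefers woman `w₁` to woman `w₂`. -/
def Profile.mpref {n : ℕ} (P : Profile n) (m w₁ w₂ : Fin n) : Prop :=
  (P.M m).symm w₁ < (P.M m).symm w₂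

/-- Woman `w` strictly prefers man `m₁` to man `m₂`. -/
def Profile.wpref {n : ℕ} (P : Profile n) (w m₁ m₂ : Fin n) : Prop :=
  (P.W w).symm m₁ < (P.W w).symm m₂

/-- State of the Gale–Shapley (deferred acceptance) algorithm:
`next m` is the rank of the next woman `m` will propose to, `wmatch w` is the man
currently (tentatively) held by woman `w`, `props` records all proposals made so far. -/
structure GSState (n : ℕ) where
  next : Fin n → ℕ
  wmatch : Fin n → Option (Fin n)
  props : List (Fin n × Fin n)

/-- Man `m` is currently not held by any woman. -/
def isUnmatched {n : ℕ} (s : GSState n) (m : Fin n) : Bool :=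
  decide (∀ w, s.wmatch w ≠ some m)

/-- One step of men-proposing deferred acceptance: the first unmatched man
proposes to the next woman on his list; she keeps her favorite proposer so far. -/
def GSstep {n : ℕ} (P : Profile n) (s : GSState n) : GSState n :=
  match (List.finRange n).find? (fun m => isUnmatched s m && decide (s.next m < n)) with
  | none => s
  | some m =>
    if h : s.next m < n then
      let w := P.M m ⟨s.next m, h⟩
      let s' : GSState n :=
        { next := Function.update s.next m (s.next m + 1),
          wmatch := s.wmatch,
          props := (m, w) :: s.props }
      match s.wmatch w with
      | none => { s' with wmatch := Function.update s.wmatch w (some m) }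
      | some m' =>
          if (P.W w).symm m < (P.W w).symm m' then
            { s' with wmatch := Function.update s.wmatch w (some m) }
          else s'
    else s

def GSinit (n : ℕ) : GSState n := ⟨fun _ => 0, fun _ => none, []⟩

/-- Run deferred acceptance to completion (at most `n*n` proposals occur). -/
def GSrun {n : ℕ} (P : Profile n) : GSState n := (GSstep P)^[n * n + 1] (GSinit n)


namespace SM
variable {n : ℕ} (P : Profile n)

def mrk (m w : Fin n) : ℕ := ((P.M m).symm w : ℕ)
def wrk (w m : Fin n) : ℕ := ((P.W w).symm m : ℕ)

lemma mrk_inj {m : Fin n} {w w' : Fin n} (h : mrk P m w = mrk P m w') : w = w' := by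
  have := Fin.val_injective h
  exact (P.M m).symm.injective this

lemma wrk_inj {w : Fin n} {m m' : Fin n} (h : wrk P w m = wrk P w m') : m = m' := by
  have := Fin.val_injective h
  exact (P.W w).symm.injective this

def Stepped (s t : GSState n) (m w : Fin n) : Prop :=
  (∀ w', s.wmatch w' ≠ some m) ∧
  mrk P m w = s.next m ∧
  t.next = Function.update s.next m (s.next m + 1) ∧
  t.props = (m, w) :: s.props ∧
  ((t.wmatch = Function.update s.wmatch w (some m) ∧
      (s.wmatch w = none ∨ ∃ m', s.wmatch w = some m' ∧ wrk P w m < wrk P w m')) ∨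
   (t.wmatch = s.wmatch ∧ ∃ m', s.wmatch w = some m' ∧ wrk P w m' ≤ wrk P w m))

lemma step_analysis (s : GSState n) :
    (GSstep P s = s ∧ ∀ m, (∀ w, s.wmatch w ≠ some m) → ¬ (s.next m < n)) ∨
    ∃ m w, s.next m < n ∧ Stepped P s (GSstep P s) m w := by
  rcases hf : (List.finRange n).find?
      (fun m => isUnmatched s m && decide (s.next m < n)) with _ | m
  · left
    constructor
    · unfold GSstep; rw [hf]
    · intro m hm hlt
      have hmem : m ∈ List.finRange n := List.mem_finRange m
      have := List.find?_eq_none.mp hf m hmem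
      simp [isUnmatched, hm, hlt] at this
  · right
    have hpred := List.find?_some hf
    have hum : ∀ w, s.wmatch w ≠ some m := by
      have := (Bool.and_eq_true _ _).mp hpred |>.1
      exact of_decide_eq_true this
    have h : s.next m < n := by
      have := (Bool.and_eq_true _ _).mp hpred |>.2
      exact of_decide_eq_true this
    set w := P.M m ⟨s.next m, h⟩ with hw
    refine ⟨m, w, h, hum, ?_, ?_⟩
    · simp [mrk, hw]
    · rcases hmw : s.wmatch w with _ | m'
      · have hstep : GSstep P s =
            { next := Function.update s.next m (s.next m + 1),
              wmatch := Function.update s.wmatch w (some m),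
              props := (m, w) :: s.props } := by
          unfold GSstep; rw [hf]; dsimp only; rw [dif_pos h]
          rw [← hw, hmw]
        rw [hstep]
        exact ⟨rfl, rfl, Or.inl ⟨rfl, Or.inl rfl⟩⟩
      · by_cases hlt : (P.W w).symm m < (P.W w).symm m'
        · have hstep : GSstep P s =
              { next := Function.update s.next m (s.next m + 1),
                wmatch := Function.update s.wmatch w (some m),
                props := (m, w) :: s.props } := by
            unfold GSstep; rw [hf]; dsimp only; rw [dif_pos h]
            rw [← hw, hmw]; dsimp only; rw [if_pos hlt]
          rw [hstep]
          exact ⟨rfl, rfl, Or.inl ⟨rfl, Or.inr ⟨m', rfl, hlt⟩⟩⟩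
        · have hstep : GSstep P s =
              { next := Function.update s.next m (s.next m + 1),
                wmatch := s.wmatch,
                props := (m, w) :: s.props } := by
            unfold GSstep; rw [hf]; dsimp only; rw [dif_pos h]
            rw [← hw, hmw]; dsimp only; rw [if_neg hlt]
          rw [hstep]
          refine ⟨rfl, rfl, Or.inr ⟨rfl, m', rfl, ?_⟩⟩
          exact Nat.le_of_not_lt (fun hc => hlt (Fin.lt_def.mpr hc))

end SM

namespace SM
variable {n : ℕ} (P : Profile n)

structure Inv (s : GSState n) : Prop where
  nle : ∀ m, s.next m ≤ n
  inj : ∀ w w' m, s.wmatch w = some m → s.wmatch w' = some m → w = w'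
  mrank : ∀ w m, s.wmatch w = some m → s.next m = mrk P m w + 1
  recv : ∀ m w, mrk P m w < s.next m → ∃ m', s.wmatch w = some m' ∧ wrk P w m' ≤ wrk P w m
  piff : ∀ m w, (m, w) ∈ s.props ↔ mrk P m w < s.next m
  nodup : s.props.Nodup

lemma inv_init : Inv P (GSinit n) := by
  constructor
  · intro m; exact Nat.zero_le n
  · intro w w' m h; simp [GSinit] at h
  · intro w m h; simp [GSinit] at h
  · intro m w h; simp [GSinit] at h
  · intro m w; simp [GSinit]
  · simp [GSinit]

lemma inv_step {s t : GSState n} {m w : Fin n} (hI : Inv P s)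
    (hlt : s.next m < n) (hst : Stepped P s t m w) : Inv P t := by
  obtain ⟨hum, hr, hnext, hprops, hm⟩ := hst
  have hnle : ∀ m', t.next m' ≤ n := by
    intro m'; rw [hnext]
    rcases eq_or_ne m' m with rfl | hne
    · rw [Function.update_self]; omega
    · rw [Function.update_of_ne hne]; exact hI.nle m'
  have hpiff : ∀ m₀ w₀, (m₀, w₀) ∈ t.props ↔ mrk P m₀ w₀ < t.next m₀ := by
    intro m₀ w₀
    rw [hprops, hnext, List.mem_cons]
    constructor
    · rintro (heq | hmem)
      · obtain ⟨h1, h2⟩ := Prod.mk.injEq .. ▸ heq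
        subst h1; subst h2
        rw [Function.update_self, hr]; omega
      · have := (hI.piff m₀ w₀).mp hmem
        rcases eq_or_ne m₀ m with rfl | hne
        · rw [Function.update_self]; omega
        · rw [Function.update_of_ne hne]; exact this
    · intro hlt'
      rcases eq_or_ne m₀ m with rfl | hne
      · rw [Function.update_self] at hlt'
        rcases Nat.lt_succ_iff_lt_or_eq.mp hlt' with h' | h'
        · exact Or.inr ((hI.piff m₀ w₀).mpr h')
        · left; rw [← hr] at h'
          rw [mrk_inj P h']
      · rw [Function.update_of_ne hne] at hlt'
        exact Or.inr ((hI.piff m₀ w₀).mpr hlt')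
  have hnodup : t.props.Nodup := by
    rw [hprops]
    refine List.nodup_cons.mpr ⟨?_, hI.nodup⟩
    intro hmem
    have := (hI.piff m w).mp hmem
    omega
  rcases hm with ⟨hwm, hcase⟩ | ⟨hwm, m'', hm'', hwk⟩
  · -- accepted
    refine ⟨hnle, ?_, ?_, ?_, hpiff, hnodup⟩
    · intro w₁ w₂ m₀ h1 h2
      rw [hwm] at h1 h2
      rcases eq_or_ne w₁ w with rfl | hne1
      case inl =>
        rcases eq_or_ne w₂ w₁ with rfl | hne2
        · rfl
        · rw [Function.update_self] at h1
          rw [Function.update_of_ne hne2] at h2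
          obtain rfl : m = m₀ := by injection h1
          exact absurd h2 (hum w₂)
      rcases eq_or_ne w₂ w with rfl | hne2
      · rw [Function.update_self] at h2
        rw [Function.update_of_ne hne1] at h1
        obtain rfl : m = m₀ := by injection h2
        exact absurd h1 (hum w₁)
      · rw [Function.update_of_ne hne1] at h1
        rw [Function.update_of_ne hne2] at h2
        exact hI.inj w₁ w₂ m₀ h1 h2
    · intro w₀ m₀ h0
      rw [hwm] at h0; rw [hnext]
      rcases eq_or_ne w₀ w with rfl | hne
      · rw [Function.update_self] at h0
        obtain rfl : m = m₀ := by injection h0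
        rw [Function.update_self, hr]
      · rw [Function.update_of_ne hne] at h0
        have hne' : m₀ ≠ m := fun h => (h ▸ hum w₀) h0
        rw [Function.update_of_ne hne']
        exact hI.mrank w₀ m₀ h0
    · intro m₀ w₀ h0
      rw [hnext] at h0; rw [hwm]
      rcases eq_or_ne m₀ m with rfl | hne
      · rw [Function.update_self] at h0
        rcases Nat.lt_succ_iff_lt_or_eq.mp h0 with h' | h'
        · obtain ⟨m', hm', hwk'⟩ := hI.recv m₀ w₀ h'
          have hne' : w₀ ≠ w := by
            rintro rfl
            rw [← hr] at h'; omega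
          rw [Function.update_of_ne hne']
          exact ⟨m', hm', hwk'⟩
        · rw [← hr] at h'
          obtain rfl := mrk_inj P h'
          rw [Function.update_self]
          exact ⟨m₀, rfl, le_refl _⟩
      · rw [Function.update_of_ne hne] at h0
        obtain ⟨m', hm', hwk'⟩ := hI.recv m₀ w₀ h0
        rcases eq_or_ne w₀ w with rfl | hne'
        · rw [Function.update_self]
          refine ⟨m, rfl, ?_⟩
          rcases hcase with hnone | ⟨m₂, hm₂, hlt₂⟩
          · rw [hnone] at hm'; exact absurd hm' (by simp)
          · rw [hm₂] at hm'
            obtain rfl : m₂ = m' := by injection hm'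
            omega
        · rw [Function.update_of_ne hne']
          exact ⟨m', hm', hwk'⟩
  · -- rejected
    refine ⟨hnle, ?_, ?_, ?_, hpiff, hnodup⟩
    · intro w₁ w₂ m₀ h1 h2
      rw [hwm] at h1 h2
      exact hI.inj w₁ w₂ m₀ h1 h2
    · intro w₀ m₀ h0
      rw [hwm] at h0; rw [hnext]
      have hne' : m₀ ≠ m := fun h => (h ▸ hum w₀) h0
      rw [Function.update_of_ne hne']
      exact hI.mrank w₀ m₀ h0
    · intro m₀ w₀ h0
      rw [hnext] at h0; rw [hwm]
      rcases eq_or_ne m₀ m with rfl | hne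
      · rw [Function.update_self] at h0
        rcases Nat.lt_succ_iff_lt_or_eq.mp h0 with h' | h'
        · exact hI.recv m₀ w₀ h'
        · rw [← hr] at h'
          obtain rfl := mrk_inj P h'
          exact ⟨m'', hm'', hwk⟩
      · rw [Function.update_of_ne hne] at h0
        exact hI.recv m₀ w₀ h0

def st (k : ℕ) : GSState n := (GSstep P)^[k] (GSinit n)

lemma inv_st (k : ℕ) : Inv P (st P k) := by
  induction k with
  | zero => exact inv_init P
  | succ k ih =>
    have : st P (k+1) = GSstep P (st P k) := Function.iterate_succ_apply' _ _ _
    rw [this]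
    rcases step_analysis P (st P k) with ⟨hfix, _⟩ | ⟨m, w, hlt, hst⟩
    · rw [hfix]; exact ih
    · exact inv_step P ih hlt hst

end SM

/-- The men-proposing deferred acceptance matching, as a map from men to women. -/
noncomputable def DA {n : ℕ} (P : Profile n) : Fin n → Fin n :=
  fun m => if h : ∃ w, (GSrun P).wmatch w = some m then h.choose else m

/-- Man `m` proposes to woman `w` during the run of deferred acceptance on `P`. -/
def Proposes {n : ℕ} (P : Profile n) (m w : Fin n) : Prop :=
  (m, w) ∈ (GSrun P).props

/-- `(m, w)` is a blocking pair for the matching `μ` (men to women) w.r.t. profile `P`. -/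
def Blocks {n : ℕ} (P : Profile n) (μ : Fin n → Fin n) (m w : Fin n) : Prop :=
  P.mpref m w (μ m) ∧ ∃ m', μ m' = w ∧ P.wpref w m m'

/-- `μ` is a stable matching with respect to profile `P`. -/
def Stable {n : ℕ} (P : Profile n) (μ : Fin n → Fin n) : Prop :=
  Function.Bijective μ ∧ ∀ m w, ¬ Blocks P μ m w


namespace SM
variable {n : ℕ} (P : Profile n)

lemma props_len_le {s : GSState n} (h : s.props.Nodup) : s.props.length ≤ n * n := by
  have := List.Nodup.length_le_card h
  simpa using this

lemma exists_fix : ∃ k, k ≤ n * n ∧ GSstep P (st P k) = st P k := by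
  by_contra hc
  push_neg at hc
  have key : ∀ k, k ≤ n * n + 1 → k ≤ (st P k).props.length := by
    intro k
    induction k with
    | zero => intro _; exact Nat.zero_le _
    | succ k ih =>
      intro hk
      have hk' : k ≤ n * n := by omega
      have hne := hc k hk'
      have hsucc : st P (k+1) = GSstep P (st P k) := Function.iterate_succ_apply' _ _ _
      rcases step_analysis P (st P k) with ⟨hfix, _⟩ | ⟨m, w, hlt, hst⟩
      · exact absurd hfix hne
      · obtain ⟨_, _, _, hprops, _⟩ := hst
        rw [hsucc, hprops]
        simp only [List.length_cons]
        have := ih (by omega)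
        omega
  have h1 := key (n * n + 1) le_rfl
  have h2 := props_len_le (inv_st P (n * n + 1)).nodup
  omega

lemma run_eq_st : GSrun P = st P (n * n + 1) := rfl

lemma inv_run : Inv P (GSrun P) := inv_st P (n * n + 1)

lemma run_fixed : GSstep P (GSrun P) = GSrun P := by
  obtain ⟨k, hk, hfix⟩ := exists_fix P
  have hrun : GSrun P = st P k := by
    rw [run_eq_st]
    have : n * n + 1 = (n * n + 1 - k) + k := by omega
    rw [this]
    show (GSstep P)^[(n * n + 1 - k) + k] (GSinit n) = st P k
    rw [Function.iterate_add_apply]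
    exact Function.iterate_fixed hfix _
  rw [hrun]; exact hfix

lemma run_terminal : ∀ m, (∀ w, (GSrun P).wmatch w ≠ some m) → ¬((GSrun P).next m < n) := by
  rcases step_analysis P (GSrun P) with ⟨_, hterm⟩ | ⟨m, w, hlt, hst⟩
  · exact hterm
  · obtain ⟨_, _, _, hprops, _⟩ := hst
    rw [run_fixed] at hprops
    exact absurd hprops (by simp)

lemma run_matched (m : Fin n) : ∃ w, (GSrun P).wmatch w = some m := by
  by_contra hm
  push_neg at hm
  have hn : (GSrun P).next m = n :=
    le_antisymm ((inv_run P).nle m) (Nat.le_of_not_lt (run_terminal P m hm))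
  have hall : ∀ w, ∃ m', (GSrun P).wmatch w = some m' ∧ wrk P w m' ≤ wrk P w m := by
    intro w
    apply (inv_run P).recv
    rw [hn]
    exact ((P.M m).symm w).isLt
  choose f hf _ using hall
  have hinj : Function.Injective f := by
    intro w w' h
    exact (inv_run P).inj w w' (f w) (hf w) (h ▸ hf w')
  obtain ⟨w, hw⟩ := Finite.surjective_of_injective hinj m
  exact hm w (hw ▸ hf w)

lemma DA_spec (m : Fin n) : (GSrun P).wmatch (DA P m) = some m := by
  unfold DA
  rw [dif_pos (run_matched P m)]
  exact (run_matched P m).choose_spec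

lemma DA_inj : Function.Injective (DA P) := by
  intro m m' h
  have h1 := DA_spec P m
  have h2 := DA_spec P m'
  rw [h] at h1
  rw [h1] at h2
  injection h2

lemma DA_bij : Function.Bijective (DA P) :=
  Finite.injective_iff_bijective.mp (DA_inj P)

lemma wmatch_eq_iff_DA {w : Fin n} {m : Fin n} :
    (GSrun P).wmatch w = some m ↔ DA P m = w := by
  constructor
  · intro h; exact (inv_run P).inj _ _ _ (DA_spec P m) h
  · rintro rfl; exact DA_spec P m

lemma DA_rank (m : Fin n) : (GSrun P).next m = mrk P m (DA P m) + 1 :=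
  (inv_run P).mrank _ _ (DA_spec P m)

lemma mpref_iff {m w₁ w₂ : Fin n} : P.mpref m w₁ w₂ ↔ mrk P m w₁ < mrk P m w₂ := Fin.lt_def

lemma wpref_iff {w m₁ m₂ : Fin n} : P.wpref w m₁ m₂ ↔ wrk P w m₁ < wrk P w m₂ := Fin.lt_def

lemma DA_stable : Stable P (DA P) := by
  refine ⟨DA_bij P, ?_⟩
  rintro m w ⟨hpref, m', hμ, hwp⟩
  have h1 : mrk P m w < (GSrun P).next m := by
    rw [DA_rank P m]
    have := (mpref_iff P).mp hpref
    omega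
  obtain ⟨p, hp, hple⟩ := (inv_run P).recv m w h1
  have : p = m' := by
    have := (wmatch_eq_iff_DA P).mpr hμ
    rw [hp] at this; injection this
  subst this
  have := (wpref_iff P).mp hwp
  omega

end SM

namespace SM
variable {n : ℕ} (P : Profile n)

open Classical

def addedAt (k : ℕ) (m w : Fin n) : Prop :=
  (m, w) ∉ (st P k).props ∧ (m, w) ∈ (st P (k+1)).props

lemma st_succ (k : ℕ) : st P (k+1) = GSstep P (st P k) :=
  Function.iterate_succ_apply' _ _ _

lemma props_mono_succ (k : ℕ) : (st P k).props ⊆ (st P (k+1)).props := by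
  rw [st_succ]
  rcases step_analysis P (st P k) with ⟨hfix, _⟩ | ⟨m, w, _, ⟨_, _, _, hp, _⟩⟩
  · rw [hfix]; exact fun x hx => hx
  · rw [hp]; exact fun x hx => List.mem_cons_of_mem _ hx

lemma props_mono {k l : ℕ} (h : k ≤ l) : (st P k).props ⊆ (st P l).props := by
  induction l with
  | zero => have : k = 0 := by omega
            subst this; exact fun x hx => hx
  | succ l ih =>
    rcases Nat.lt_succ_iff_lt_or_eq.mp (Nat.lt_succ_of_le h) with h' | h'
    · exact fun x hx => props_mono_succ P l (ih (by omega) hx)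
    · subst h'; exact fun x hx => hx

lemma next_mono_succ (k : ℕ) (m : Fin n) : (st P k).next m ≤ (st P (k+1)).next m := by
  rw [st_succ]
  rcases step_analysis P (st P k) with ⟨hfix, _⟩ | ⟨m', w', _, ⟨_, _, hn, _, _⟩⟩
  · rw [hfix]
  · rw [hn]
    rcases eq_or_ne m m' with rfl | hne
    · rw [Function.update_self]; omega
    · rw [Function.update_of_ne hne]

lemma next_mono {k l : ℕ} (h : k ≤ l) (m : Fin n) : (st P k).next m ≤ (st P l).next m := by
  induction l with
  | zero => have : k = 0 := by omega
            subst this; exact le_refl _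
  | succ l ih =>
    rcases Nat.lt_succ_iff_lt_or_eq.mp (Nat.lt_succ_of_le h) with h' | h'
    · exact le_trans (ih (by omega)) (next_mono_succ P l m)
    · subst h'; exact le_refl _

lemma added_exists {K : ℕ} {m w : Fin n} (h : (m, w) ∈ (st P K).props) :
    ∃ k, k < K ∧ addedAt P k m w := by
  induction K with
  | zero => simp [st, GSinit] at h
  | succ K ih =>
    by_cases hmem : (m, w) ∈ (st P K).props
    · obtain ⟨k, hk, hadd⟩ := ih hmem
      exact ⟨k, by omega, hadd⟩
    · exact ⟨K, by omega, hmem, h⟩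

lemma added_unique {k l : ℕ} {m w : Fin n} (h1 : addedAt P k m w) (h2 : addedAt P l m w) :
    k = l := by
  by_contra hne
  rcases Nat.lt_or_ge k l with h | h
  · exact h2.1 (props_mono P h h1.2)
  · have : l < k := by omega
    exact h1.1 (props_mono P this h2.2)

lemma added_step {k : ℕ} {m w : Fin n} (h : addedAt P k m w) :
    (st P k).next m < n ∧ Stepped P (st P k) (st P (k+1)) m w := by
  rcases step_analysis P (st P k) with ⟨hfix, _⟩ | ⟨m', w', hlt, hst⟩
  · exfalso; apply h.1
    have := h.2
    rw [st_succ, hfix] at this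
    exact this
  · have hp := hst.2.2.2.1
    have hmem := h.2
    rw [st_succ] at hmem ⊢
    rw [hp] at hmem
    rcases List.mem_cons.mp hmem with heq | hmem'
    · obtain ⟨rfl, rfl⟩ := Prod.mk.injEq .. ▸ heq
      refine ⟨hlt, ?_⟩
      rw [← st_succ] at hst ⊢
      exact hst
    · exact absurd hmem' h.1

lemma added_same {k : ℕ} {m w m' w' : Fin n} (h1 : addedAt P k m w) (h2 : addedAt P k m' w') :
    m = m' ∧ w = w' := by
  have hs := (added_step P h1).2
  have hp := hs.2.2.2.1
  have := h2.2
  rw [hp] at this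
  rcases List.mem_cons.mp this with heq | hmem
  · obtain ⟨h3, h4⟩ := Prod.mk.injEq .. ▸ heq
    exact ⟨h3.symm, h4.symm⟩
  · exact absurd hmem h2.1

lemma rank_time {k l : ℕ} {m w w' : Fin n} (h1 : addedAt P k m w) (h2 : addedAt P l m w')
    (hr : mrk P m w < mrk P m w') : k < l := by
  have hs1 := (added_step P h1).2
  have hs2 := (added_step P h2).2
  have e1 : mrk P m w = (st P k).next m := hs1.2.1
  have e2 : mrk P m w' = (st P l).next m := hs2.2.1
  by_contra hc
  have : l ≤ k := by omega
  have := next_mono P this m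
  omega

lemma wmatch_change {v : ℕ} {w : Fin n}
    (h : (st P (v+1)).wmatch w ≠ (st P v).wmatch w) :
    ∃ q, (st P (v+1)).wmatch w = some q ∧ addedAt P v q w := by
  rcases step_analysis P (st P v) with ⟨hfix, _⟩ | ⟨m', w', hlt, hst⟩
  · exfalso; apply h; rw [st_succ, hfix]
  · obtain ⟨hum, hr, hn, hp, hcase⟩ := hst
    rw [st_succ] at h ⊢
    rcases hcase with ⟨hwm, _⟩ | ⟨hwm, _⟩
    · rcases eq_or_ne w w' with rfl | hne
      · refine ⟨m', by rw [hwm, Function.update_self], ?_, ?_⟩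
        · intro hmem
          have := ((inv_st P v).piff m' w).mp hmem
          omega
        · rw [st_succ, hp]; exact List.mem_cons_self
      · exfalso; apply h; rw [hwm, Function.update_of_ne hne]
    · exfalso; apply h; rw [hwm]

lemma flip_point {Q : ℕ → Prop} {a b : ℕ} (hab : a ≤ b) (ha : ¬ Q a) (hb : Q b) :
    ∃ v, a ≤ v ∧ v < b ∧ ¬ Q v ∧ Q (v+1) := by
  induction b with
  | zero =>
    obtain rfl : a = 0 := by omega
    exact absurd hb ha
  | succ b ih =>
    rcases Nat.lt_succ_iff_lt_or_eq.mp (Nat.lt_succ_of_le hab) with h' | h'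
    · by_cases hQb : Q b
      · obtain ⟨v, h1, h2, h3, h4⟩ := ih (by omega) hQb
        exact ⟨v, h1, by omega, h3, h4⟩
      · exact ⟨b, by omega, by omega, hQb, hb⟩
    · subst h'; exact absurd hb ha

lemma hold_from {k K : ℕ} {p w : Fin n} (hadd : addedAt P k p w)
    (hfin : (st P K).wmatch w = some p) : ∀ u, k < u → u ≤ K → (st P u).wmatch w = some p := by
  intro u hku huK
  by_contra hu
  have huK' : u ≠ K := fun h => hu (h ▸ hfin)
  obtain ⟨v, hv1, hv2, hv3, hv4⟩ := flip_point (Q := fun u => (st P u).wmatch w = some p)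
    (by omega : u ≤ K) hu hfin
  have hne : (st P (v+1)).wmatch w ≠ (st P v).wmatch w := by
    intro h; rw [h] at hv4; exact hv3 hv4
  obtain ⟨q, hq1, hq2⟩ := wmatch_change P hne
  have : q = p := by rw [hq1] at hv4; injection hv4
  subst this
  have := added_unique P hadd hq2
  omega

lemma st_ge_run {k : ℕ} (h : n * n + 1 ≤ k) : st P k = GSrun P := by
  have : k = (k - (n * n + 1)) + (n * n + 1) := by omega
  rw [this]
  show (GSstep P)^[(k - (n*n+1)) + (n*n+1)] (GSinit n) = GSrun P
  rw [Function.iterate_add_apply]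
  exact Function.iterate_fixed (run_fixed P) _

lemma added_lt {k : ℕ} {m w : Fin n} (h : addedAt P k m w) : k < n * n + 1 := by
  by_contra hc
  push_neg at hc
  have e1 : st P k = GSrun P := st_ge_run P hc
  have e2 : st P (k+1) = GSrun P := st_ge_run P (by omega)
  apply h.1
  have h2 := h.2
  rw [e2] at h2
  rw [e1]
  exact h2

end SM

namespace SM
variable {n : ℕ} (P : Profile n)

lemma run_st_eq : st P (n * n + 1) = GSrun P := rfl

lemma mem_props_run {m w : Fin n} :
    (m, w) ∈ (GSrun P).props ↔ mrk P m w < mrk P m (DA P m) + 1 := by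
  rw [(inv_run P).piff m w, DA_rank P m]

lemma blocking_lemma (ν : Fin n → Fin n) (hν : Function.Bijective ν)
    (hne : ∃ m, P.mpref m (ν m) (DA P m)) :
    ∃ m₂ w₁, ¬ P.mpref m₂ (ν m₂) (DA P m₂) ∧ Blocks P ν m₂ w₁ := by
  classical
  set S : Finset (Fin n) := Finset.univ.filter (fun m => P.mpref m (ν m) (DA P m)) with hS
  have hmemS : ∀ m, m ∈ S ↔ P.mpref m (ν m) (DA P m) := by
    intro m; simp [hS]
  by_cases hsub : S.image ν ⊆ S.image (DA P)
  case neg =>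
    -- static case
    obtain ⟨w, hw1, hw2⟩ := Finset.not_subset.mp hsub
    obtain ⟨m₀, hm₀S, rfl⟩ := Finset.mem_image.mp hw1
    have hm₀ : P.mpref m₀ (ν m₀) (DA P m₀) := (hmemS m₀).mp hm₀S
    have h1 : mrk P m₀ (ν m₀) < (GSrun P).next m₀ := by
      rw [DA_rank P m₀]
      have := (mpref_iff P).mp hm₀
      omega
    obtain ⟨p, hp, hple⟩ := (inv_run P).recv m₀ (ν m₀) h1
    have hm' : DA P p = ν m₀ := (wmatch_eq_iff_DA P).mp hp
    have hpS : ¬ P.mpref p (ν p) (DA P p) := by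
      intro h
      exact hw2 (Finset.mem_image.mpr ⟨p, (hmemS p).mpr h, hm'⟩)
    have hne' : p ≠ m₀ := by
      rintro rfl
      rw [hm'] at hm₀
      have := (mpref_iff P).mp hm₀
      omega
    have hwstrict : wrk P (ν m₀) p < wrk P (ν m₀) m₀ :=
      lt_of_le_of_ne hple (fun h => hne' (wrk_inj P h))
    refine ⟨p, ν m₀, hpS, ?_, ⟨m₀, rfl, (wpref_iff P).mpr hwstrict⟩⟩
    have hle : mrk P p (DA P p) ≤ mrk P p (ν p) := by
      have := (mpref_iff P (m := p) (w₁ := ν p) (w₂ := DA P p)).not.mp hpS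
      omega
    rw [hm'] at hle
    apply (mpref_iff P).mpr
    refine lt_of_le_of_ne hle (fun h => ?_)
    exact hne' (hν.injective (mrk_inj P h.symm))
  case pos =>
    have hcard : (S.image (DA P)).card ≤ (S.image ν).card := by
      rw [Finset.card_image_of_injective S hν.injective,
        Finset.card_image_of_injective S (DA_inj P)]
    have himg : S.image ν = S.image (DA P) := Finset.eq_of_subset_of_card_le hsub hcard
    obtain ⟨ms, hms⟩ := hne
    set K := n * n + 1 with hK
    set Q : ℕ → Prop := fun k => ∃ m w, P.mpref m (ν m) (DA P m) ∧ w ∈ S.image (DA P) ∧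
      addedAt P k m w with hQdef
    have hpropsS : ∀ m, P.mpref m (ν m) (DA P m) → (m, ν m) ∈ (GSrun P).props := by
      intro m hm
      rw [mem_props_run P]
      have := (mpref_iff P).mp hm
      omega
    have hQex : ∃ k, Q k ∧ k < K := by
      have := hpropsS ms hms
      rw [← run_st_eq] at this
      obtain ⟨k₀, hk₀, hadd₀⟩ := added_exists P this
      refine ⟨k₀, ⟨ms, ν ms, hms, ?_, hadd₀⟩, hk₀⟩
      rw [← himg]
      exact Finset.mem_image.mpr ⟨ms, (hmemS ms).mpr hms, rfl⟩
    obtain ⟨k₀, hQk₀, hk₀K⟩ := hQex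
    set t₁ := Nat.findGreatest Q K with ht₁def
    have hQt₁ : Q t₁ := Nat.findGreatest_spec (le_of_lt hk₀K) hQk₀
    have hmax : ∀ k, Q k → k ≤ t₁ := by
      intro k hk
      obtain ⟨m', w', h1', h2', hadd⟩ := hk
      exact Nat.le_findGreatest (le_of_lt (added_lt P hadd)) ⟨m', w', h1', h2', hadd⟩
    obtain ⟨m₁, w₁, hm₁S, hw₁, hadd₁⟩ := hQt₁
    have ht₁K : t₁ < K := added_lt P hadd₁
    obtain ⟨mw, hmwS', hmw⟩ := Finset.mem_image.mp hw₁
    have hmwS : P.mpref mw (ν mw) (DA P mw) := (hmemS mw).mp hmwS'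
    -- generic: proposal to one's DA partner is in props
    have hDAprops : ∀ m : Fin n, (m, DA P m) ∈ (st P K).props := by
      intro m
      rw [run_st_eq, mem_props_run P]
      omega
    have hfinw₁ : (st P K).wmatch w₁ = some mw := by
      rw [run_st_eq, ← hmw]
      exact DA_spec P mw
    -- Step A : m₁ = mw
    have hA : m₁ = mw := by
      by_contra hA
      have hmem : (mw, w₁) ∈ (st P K).props := hmw ▸ hDAprops mw
      obtain ⟨tw, htwK, haddw⟩ := added_exists P hmem
      have htw1 : tw ≤ t₁ := hmax tw ⟨mw, w₁, hmwS, hw₁, haddw⟩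
      have htwne : tw ≠ t₁ := by
        intro h
        subst h
        exact hA (added_same P hadd₁ haddw).1
      have hhold := hold_from P haddw hfinw₁
      have hw_t₁ : (st P t₁).wmatch w₁ = some mw := hhold t₁ (by omega) (by omega)
      have hw_t₁' : (st P (t₁+1)).wmatch w₁ = some mw := hhold (t₁+1) (by omega) (by omega)
      obtain ⟨hltn, hstep⟩ := added_step P hadd₁
      obtain ⟨hum, hr, hn, hp, hcase⟩ := hstep
      rcases hcase with ⟨hwm, _⟩ | ⟨hwm, _⟩
      · rw [hwm, Function.update_self] at hw_t₁'
        exact hA (by injection hw_t₁')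
      · -- m₁ rejected at t₁
        have hnext₁ : (st P (t₁+1)).next m₁ = mrk P m₁ w₁ + 1 := by
          rw [hn, Function.update_self, hr]
        have hDAne : DA P m₁ ≠ w₁ := by
          intro h
          exact hA (DA_inj P (h.trans hmw.symm))
        have hrank : mrk P m₁ w₁ < mrk P m₁ (DA P m₁) := by
          have hmono := next_mono P (show t₁+1 ≤ K by omega) m₁
          rw [hnext₁] at hmono
          have : (st P K).next m₁ = mrk P m₁ (DA P m₁) + 1 := by
            rw [run_st_eq]; exact DA_rank P m₁
          rw [this] at hmono
          exact lt_of_le_of_ne (by omega) (fun h => hDAne (mrk_inj P h.symm))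
        obtain ⟨t₂, ht₂K, hadd₂⟩ := added_exists P (hDAprops m₁)
        have := rank_time P hadd₁ hadd₂ hrank
        have : t₂ ≤ t₁ := hmax t₂ ⟨m₁, DA P m₁, hm₁S,
          Finset.mem_image.mpr ⟨m₁, (hmemS m₁).mpr hm₁S, rfl⟩, hadd₂⟩
        omega
    subst hA
    -- now DA P m₁ = w₁
    have hDAm₁ : DA P m₁ = w₁ := hmw
    have hfin₁ : (st P K).wmatch w₁ = some m₁ := hfinw₁
    -- Step B
    have hw₁ν : w₁ ∈ S.image ν := himg ▸ hw₁
    obtain ⟨m₃, hm₃S', hm₃⟩ := Finset.mem_image.mp hw₁ν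
    have hm₃S : P.mpref m₃ (ν m₃) (DA P m₃) := (hmemS m₃).mp hm₃S'
    have hm₃ne : m₃ ≠ m₁ := by
      rintro rfl
      rw [hm₃] at hm₃S
      rw [← hDAm₁] at hm₃S
      have := (mpref_iff P).mp hm₃S
      omega
    -- Step C
    have hmem₃ : (m₃, w₁) ∈ (st P K).props := by
      rw [← hm₃]
      rw [run_st_eq]
      exact hpropsS m₃ hm₃S
    obtain ⟨t₃, ht₃K, hadd₃⟩ := added_exists P hmem₃
    have ht₃le : t₃ ≤ t₁ := hmax t₃ ⟨m₃, w₁, hm₃S, hw₁, hadd₃⟩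
    have ht₃ne : t₃ ≠ t₁ := by
      intro h
      exact hm₃ne ((added_same P (h ▸ hadd₃) hadd₁).1)
    have ht₃lt : t₃ < t₁ := by omega
    -- Step D
    have hmem₃t₁ : (m₃, w₁) ∈ (st P t₁).props :=
      props_mono P (show t₃ + 1 ≤ t₁ by omega) hadd₃.2
    have hr₃ : mrk P m₃ w₁ < (st P t₁).next m₃ := ((inv_st P t₁).piff m₃ w₁).mp hmem₃t₁
    obtain ⟨m₂, hm₂, hwk⟩ := (inv_st P t₁).recv m₃ w₁ hr₃
    -- Step E
    obtain ⟨hltn, hstep⟩ := added_step P hadd₁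
    obtain ⟨hum, hr, hn, hp, hcase⟩ := hstep
    have hm₂ne : m₂ ≠ m₁ := by
      intro h
      exact hum w₁ (h ▸ hm₂)
    have hDAne₂ : DA P m₂ ≠ w₁ := by
      intro h
      exact hm₂ne (DA_inj P (h.trans hDAm₁.symm))
    -- Step F
    have hmem₂ : (m₂, w₁) ∈ (st P t₁).props := by
      apply ((inv_st P t₁).piff m₂ w₁).mpr
      rw [(inv_st P t₁).mrank w₁ m₂ hm₂]
      omega
    have hmem₂K : (m₂, w₁) ∈ (st P K).props := props_mono P (by omega) hmem₂
    have hF : mrk P m₂ w₁ < mrk P m₂ (DA P m₂) := by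
      have := (mem_props_run P).mp (run_st_eq P ▸ hmem₂K)
      exact lt_of_le_of_ne (by omega) (fun h => hDAne₂ (mrk_inj P h.symm))
    -- Step G
    have hG : ¬ P.mpref m₂ (ν m₂) (DA P m₂) := by
      intro hc
      obtain ⟨t₄, ht₄K, hadd₄⟩ := added_exists P (hDAprops m₂)
      have ht₄le : t₄ ≤ t₁ := hmax t₄ ⟨m₂, DA P m₂, hc,
        Finset.mem_image.mpr ⟨m₂, (hmemS m₂).mpr hc, rfl⟩, hadd₄⟩
      have ht₄ne : t₄ ≠ t₁ := by
        intro h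
        exact hm₂ne ((added_same P (h ▸ hadd₄) hadd₁).1)
      have ht₄lt : t₄ < t₁ := by omega
      obtain ⟨hltn₄, hstep₄⟩ := added_step P hadd₄
      have hnext₄ : (st P (t₄+1)).next m₂ = mrk P m₂ (DA P m₂) + 1 := by
        rw [hstep₄.2.2.1, Function.update_self, hstep₄.2.1]
      have hmono := next_mono P (show t₄+1 ≤ t₁ by omega) m₂
      rw [hnext₄, (inv_st P t₁).mrank w₁ m₂ hm₂] at hmono
      omega
    -- Step H
    have hm₂₃ : m₂ ≠ m₃ := by
      intro h
      exact hG (h ▸ hm₃S)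
    have hH : wrk P w₁ m₂ < wrk P w₁ m₃ :=
      lt_of_le_of_ne hwk (fun h => hm₂₃ (wrk_inj P h))
    refine ⟨m₂, w₁, hG, ?_, ⟨m₃, hm₃, (wpref_iff P).mpr hH⟩⟩
    apply (mpref_iff P).mpr
    have hle : mrk P m₂ (DA P m₂) ≤ mrk P m₂ (ν m₂) := by
      have := (mpref_iff P (m := m₂) (w₁ := ν m₂) (w₂ := DA P m₂)).not.mp hG
      omega
    omega

end SM

/-- Replace man `m`'s preference list by `e`. -/
def Profile.updateM {n : ℕ} (P : Profile n) (m : Fin n) (e : Fin n ≃ Fin n) : Profile n :=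
  { P with M := Function.update P.M m e }

/-- Replace woman `w`'s preference list by `e`. -/
def Profile.updateW {n : ℕ} (P : Profile n) (w : Fin n) (e : Fin n ≃ Fin n) : Profile n :=
  { P with W := Function.update P.W w e }

/-- The set of women ranked strictly above `w₀` in the list `e`. -/
def Above {n : ℕ} (e : Fin n ≃ Fin n) (w₀ : Fin n) : Set (Fin n) :=
  {w | e.symm w < e.symm w₀}

/-- The set of women ranked strictly below `w₀` in the list `e`. -/
def Below {n : ℕ} (e : Fin n ≃ Fin n) (w₀ : Fin n) : Set (Fin n) :=
  {w | e.symm w₀ < e.symm w}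

/-- `e'` is obtained from man `m`'s true list by pushing up the set `X` and pushing
down the set `Y` around the pivot `DA P m` (the order of women above and below
the pivot is immaterial, cf. Proposition 2 of the paper). -/
def PushUpDown {n : ℕ} (P : Profile n) (m : Fin n) (X Y : Set (Fin n))
    (e' : Fin n ≃ Fin n) : Prop :=
  Above e' (DA P m) = (Above (P.M m) (DA P m) ∪ X) \ Y

/-- `e'` is obtained from `m`'s true list by pushing up the set `X` above `DA P m`. -/
def PushUp {n : ℕ} (P : Profile n) (m : Fin n) (X : Set (Fin n))
    (e' : Fin n ≃ Fin n) : Prop :=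
  PushUpDown P m X ∅ e'

/-- `e'` is obtained from `m`'s true list by pushing down the set `Y` below `DA P m`. -/
def PushDown {n : ℕ} (P : Profile n) (m : Fin n) (Y : Set (Fin n))
    (e' : Fin n ≃ Fin n) : Prop :=
  PushUpDown P m ∅ Y e'

/-- Woman `w` is ranked below `DA P m` in `m`'s true list, and pushing her up
individually leaves `m`'s deferred acceptance partner unchanged (no regret). -/
def NoRegretWoman {n : ℕ} (P : Profile n) (m w : Fin n) : Prop :=
  w ∈ Below (P.M m) (DA P m) ∧
    ∀ e' : Fin n ≃ Fin n, PushUp P m {w} e' → DA (P.updateM m e') m = DA P m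

/-- The no-regret set `W^NR` of accomplice `m`. -/
def WNR {n : ℕ} (P : Profile n) (m : Fin n) : Set (Fin n) :=
  {w | NoRegretWoman P m w}


namespace SM
variable {n : ℕ} (P : Profile n)

lemma DA_optimal (ν : Fin n → Fin n) (hst : Stable P ν) (m : Fin n) :
    mrk P m (DA P m) ≤ mrk P m (ν m) := by
  by_contra h
  push_neg at h
  obtain ⟨m₂, w₁, _, hblk⟩ := blocking_lemma P ν hst.1 ⟨m, (mpref_iff P).mpr h⟩
  exact hst.2 m₂ w₁ hblk

lemma dubins_freedman (m : Fin n) (e' : Fin n ≃ Fin n) :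
    ¬ P.mpref m (DA (P.updateM m e') m) (DA P m) := by
  intro hc
  set P' := P.updateM m e' with hP'
  set ν := DA P' with hν
  obtain ⟨m₂, w₁, hm₂, hblk⟩ := blocking_lemma P ν (DA_bij P') ⟨m, hc⟩
  have hm₂ne : m₂ ≠ m := fun h => hm₂ (h ▸ hc)
  have hblk' : Blocks P' ν m₂ w₁ := by
    obtain ⟨h1, m₀, h2, h3⟩ := hblk
    refine ⟨?_, m₀, h2, h3⟩
    show (P'.M m₂).symm w₁ < (P'.M m₂).symm (ν m₂)
    have : P'.M m₂ = P.M m₂ := Function.update_of_ne hm₂ne _ _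
    rw [this]
    exact h1
  exact (DA_stable P').2 m₂ w₁ hblk'

end SM

/-- Pushing down a set `Y` of women ranked above `m`'s DA partner
makes every man weakly better off, and `m` keeps the same partner. -/
theorem pushDown_men_weakly_better (n : ℕ) (P : Profile n) (m : Fin n)
    (Y : Set (Fin n)) (hY : Y ⊆ Above (P.M m) (DA P m))
    (e' : Fin n ≃ Fin n) (hpd : PushDown P m Y e') :
    DA (P.updateM m e') m = DA P m ∧
    ∀ m' : Fin n,
      (P.M m').symm (DA (P.updateM m e') m') ≤ (P.M m').symm (DA P m') := by
  classical
  set P' := P.updateM m e' with hP'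
  have hAbove : Above e' (DA P m) = (Above (P.M m) (DA P m)) \ Y := by
    have h := hpd
    unfold PushDown PushUpDown at h
    rwa [Set.union_empty] at h
  have hMm : P'.M m = e' := Function.update_self _ _ _
  have hMne : ∀ m', m' ≠ m → P'.M m' = P.M m' := fun m' h => Function.update_of_ne h _ _
  -- DA P is stable for P'
  have hstab' : Stable P' (DA P) := by
    refine ⟨SM.DA_bij P, ?_⟩
    rintro m' w ⟨h1, m₀, h2, h3⟩
    apply (SM.DA_stable P).2 m' w
    refine ⟨?_, m₀, h2, h3⟩
    rcases eq_or_ne m' m with rfl | hne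
    · have h1' : w ∈ Above e' (DA P m') := by
        show e'.symm w < e'.symm (DA P m')
        have : (P'.M m').symm w < (P'.M m').symm (DA P m') := h1
        rwa [hMm] at this
      rw [hAbove] at h1'
      exact h1'.1
    · have : (P'.M m').symm w < (P'.M m').symm (DA P m') := h1
      rwa [hMne m' hne] at this
  have hopt : ∀ m', SM.mrk P' m' (DA P' m') ≤ SM.mrk P' m' (DA P m') :=
    SM.DA_optimal P' (DA P) hstab'
  have hdf := SM.dubins_freedman P m e'
  have h1 : DA P' m = DA P m := by
    rcases eq_or_ne (DA P' m) (DA P m) with he | hne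
    · exact he
    · exfalso
      have hlt : SM.mrk P' m (DA P' m) < SM.mrk P' m (DA P m) :=
        lt_of_le_of_ne (hopt m) (fun h => hne (SM.mrk_inj P' h))
      have hmem : DA P' m ∈ Above e' (DA P m) := by
        show e'.symm (DA P' m) < e'.symm (DA P m)
        apply Fin.lt_def.mpr
        have : ((P'.M m).symm (DA P' m) : ℕ) < (P'.M m).symm (DA P m) := hlt
        rwa [hMm] at this
      rw [hAbove] at hmem
      exact hdf hmem.1
  refine ⟨h1, ?_⟩
  intro m'
  rcases eq_or_ne m' m with rfl | hne
  · rw [h1]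
  · have h := hopt m'
    apply Fin.le_def.mpr
    have e1 : SM.mrk P' m' (DA P' m') = ((P.M m').symm (DA P' m') : ℕ) := by
      unfold SM.mrk; rw [hMne m' hne]
    have e2 : SM.mrk P' m' (DA P m') = ((P.M m').symm (DA P m') : ℕ) := by
      unfold SM.mrk; rw [hMne m' hne]
    rw [e1, e2] at h
    exact h
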